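/- arXiv:1307.7533 — 7 statements merged into one kernel-verified Lean document; each statement's English description precedes it below -/
import Mathlib

section
/- Let T : ℝ → ℝ be a continuous nondecreasing map with a unique fixed point x⋆ (i.e. T x⋆ = x⋆ and every x with T x = x equals x⋆). Suppose there exist real numbers u and v with u < x⋆ < v such that T u ≥ u and T v ≤ v. Then for every initial value x₀ ∈ ℝ, the sequence defined by x₀ and x_{t+1} = T(x_t) converges to x⋆. -/
/-- Fixed-point convergence lemma (Lemma 3 of the paper): a continuous nondecreasing
map `T : ℝ → ℝ` with a unique fixed point `x⋆`, such that there exist `u < x⋆ < v`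
with `T u ≥ u` and `T v ≤ v`, has the property that every orbit `x_{t+1} = T (x_t)`
converges to `x⋆`. -/
theorem fixed_point_convergence
    (T : ℝ → ℝ) (hcont : Continuous T) (hmono : Monotone T)
    (xstar : ℝ) (hfix : T xstar = xstar)
    (huniq : ∀ x : ℝ, T x = x → x = xstar)
    (u v : ℝ) (hu : u < xstar) (hv : xstar < v)
    (hTu : u ≤ T u) (hTv : T v ≤ v)
    (x₀ : ℝ) (x : ℕ → ℝ) (hx₀ : x 0 = x₀)
    (hrec : ∀ t : ℕ, x (t + 1) = T (x t)) :
    Filter.Tendsto x Filter.atTop (nhds xstar) := by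
  have hfcont : Continuous (fun y => T y - y) := hcont.sub continuous_id
  -- below xstar : y ≤ T y
  have hbelow : ∀ y : ℝ, y ≤ xstar → y ≤ T y := by
    intro y hy
    rcases eq_or_lt_of_le hy with rfl | hy'
    · exact hfix.ge
    by_contra hlt
    push_neg at hlt
    rcases le_total y u with hyu | huy
    · have := intermediate_value_Icc hyu (hfcont.continuousOn)
      have h0 : (0:ℝ) ∈ Set.Icc (T y - y) (T u - u) :=
        ⟨by linarith, by linarith⟩
      obtain ⟨z, hz, hz0⟩ := this h0
      have hz0' : T z - z = 0 := hz0
      have hz1 : z = xstar := huniq z (by linarith)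
      have : z < xstar := lt_of_le_of_lt hz.2 hu
      linarith
    · have := intermediate_value_Icc' huy (hfcont.continuousOn)
      have h0 : (0:ℝ) ∈ Set.Icc (T y - y) (T u - u) :=
        ⟨by linarith, by linarith⟩
      obtain ⟨z, hz, hz0⟩ := this h0
      have hz0' : T z - z = 0 := hz0
      have hz1 : z = xstar := huniq z (by linarith)
      have : z < xstar := lt_of_le_of_lt hz.2 hy'
      linarith
  have habove : ∀ y : ℝ, xstar ≤ y → T y ≤ y := by
    intro y hy
    rcases eq_or_lt_of_le hy with rfl | hy'
    · exact hfix.le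
    by_contra hlt
    push_neg at hlt
    rcases le_total v y with hvy | hyv
    · have := intermediate_value_Icc hvy (hfcont.continuousOn)
      have h0 : (0:ℝ) ∈ Set.Icc (T v - v) (T y - y) :=
        ⟨by linarith, by linarith⟩
      obtain ⟨z, hz, hz0⟩ := this h0
      have hz0' : T z - z = 0 := hz0
      have hz1 : z = xstar := huniq z (by linarith)
      have : xstar < z := lt_of_lt_of_le hv hz.1
      linarith
    · have := intermediate_value_Icc' hyv (hfcont.continuousOn)
      have h0 : (0:ℝ) ∈ Set.Icc (T v - v) (T y - y) :=
        ⟨by linarith, by linarith⟩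
      obtain ⟨z, hz, hz0⟩ := this h0
      have hz0' : T z - z = 0 := hz0
      have hz1 : z = xstar := huniq z (by linarith)
      have : xstar < z := lt_of_lt_of_le hy' hz.1
      linarith
  -- limit identification helper
  have hlim : ∀ L : ℝ, Filter.Tendsto x Filter.atTop (nhds L) →
      Filter.Tendsto x Filter.atTop (nhds xstar) := by
    intro L hL
    have h1 : Filter.Tendsto (fun t => x (t + 1)) Filter.atTop (nhds L) :=
      hL.comp (Filter.tendsto_add_atTop_nat 1)
    have h2 : Filter.Tendsto (fun t => T (x t)) Filter.atTop (nhds (T L)) :=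
      (hcont.tendsto L).comp hL
    have h3 : Filter.Tendsto (fun t => x (t + 1)) Filter.atTop (nhds (T L)) := by
      simpa only [hrec] using h2
    have : T L = L := tendsto_nhds_unique h3 h1
    rwa [huniq L this] at hL
  rcases le_total (x 0) xstar with h0 | h0
  · -- sequence stays ≤ xstar, monotone increasing
    have hinv : ∀ t, x t ≤ xstar := by
      intro t; induction t with
      | zero => exact h0
      | succ n ih => rw [hrec]; calc T (x n) ≤ T xstar := hmono ih
                                     _ = xstar := hfix
    have hmonoseq : Monotone x := by
      apply monotone_nat_of_le_succ
      intro n; rw [hrec]; exact hbelow (x n) (hinv n)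
    rcases tendsto_of_monotone hmonoseq with htop | ⟨L, hL⟩
    · exfalso
      have := (htop.eventually (Filter.eventually_gt_atTop xstar)).exists
      obtain ⟨t, ht⟩ := this
      exact absurd (hinv t) (not_le.2 ht)
    · exact hlim L hL
  · have hinv : ∀ t, xstar ≤ x t := by
      intro t; induction t with
      | zero => exact h0
      | succ n ih => rw [hrec]; calc xstar = T xstar := hfix.symm
                                     _ ≤ T (x n) := hmono ih
    have hantiseq : Antitone x := by
      apply antitone_nat_of_succ_le
      intro n; rw [hrec]; exact habove (x n) (hinv n)
    rcases tendsto_of_antitone hantiseq with hbot | ⟨L, hL⟩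
    · exfalso
      have := (hbot.eventually (Filter.eventually_lt_atBot xstar)).exists
      obtain ⟨t, ht⟩ := this
      exact absurd (hinv t) (not_le.2 ht)
    · exact hlim L hL
end

section
/- Let a, b, c, d be nonnegative real numbers with a > 0, and define f : (0, ∞) → ℝ by f(x) = (a + b/x) / ((c + √(d + b/x))² + a + b/x). Then (i) f(x) tends to f∞ := a / ((c + √d)² + a) as x → ∞, and (ii) there exists a real number m with 0 < m < ∞ such that f(x) ≤ f∞ + m/x for every x > 0. -/
/-- Lemma 2 of the paper (from [zaidiACC11, Lemma 4.1]): for nonnegative `a, b, c, d`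
with `a > 0`, the function `f(x) = (a + b/x) / ((c + √(d + b/x))² + a + b/x)` tends to
`f∞ = a / ((c + √d)² + a)` as `x → ∞`, and there is `0 < m < ∞` with
`f(x) ≤ f∞ + m/x` for all `x > 0`. -/
theorem lemma_affine_majorization
    (a b c d : ℝ) (ha : 0 < a) (hb : 0 ≤ b) (hc : 0 ≤ c) (hd : 0 ≤ d) :
    Filter.Tendsto
      (fun x : ℝ => (a + b / x) / ((c + Real.sqrt (d + b / x)) ^ 2 + a + b / x))
      Filter.atTop (nhds (a / ((c + Real.sqrt d) ^ 2 + a))) ∧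
    ∃ m : ℝ, 0 < m ∧ ∀ x : ℝ, 0 < x →
      (a + b / x) / ((c + Real.sqrt (d + b / x)) ^ 2 + a + b / x) ≤
        a / ((c + Real.sqrt d) ^ 2 + a) + m / x := by
  have hsd : 0 ≤ Real.sqrt d := Real.sqrt_nonneg d
  have hD0 : (0:ℝ) < (c + Real.sqrt d) ^ 2 + a := by positivity
  constructor
  · have hg : Filter.Tendsto (fun x : ℝ => b / x) Filter.atTop (nhds 0) :=
      tendsto_const_nhds.div_atTop Filter.tendsto_id
    have hnum : Filter.Tendsto (fun x : ℝ => a + b / x) Filter.atTop (nhds a) := by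
      simpa using tendsto_const_nhds.add hg
    have hden : Filter.Tendsto
        (fun x : ℝ => (c + Real.sqrt (d + b / x)) ^ 2 + a + b / x)
        Filter.atTop (nhds ((c + Real.sqrt d) ^ 2 + a)) := by
      have h1 : Filter.Tendsto (fun x : ℝ => d + b / x) Filter.atTop (nhds d) := by
        simpa using tendsto_const_nhds.add hg
      have h2 : Filter.Tendsto (fun x : ℝ => Real.sqrt (d + b / x)) Filter.atTop
          (nhds (Real.sqrt d)) := (Real.continuous_sqrt.tendsto d).comp h1
      have h3 : Filter.Tendsto
          (fun x : ℝ => (c + Real.sqrt (d + b / x)) ^ 2 + a + b / x)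
          Filter.atTop (nhds ((c + Real.sqrt d) ^ 2 + a + 0)) :=
        (((tendsto_const_nhds.add h2).pow 2).add tendsto_const_nhds).add hg
      simpa using h3
    exact hnum.div hden (ne_of_gt hD0)
  · refine ⟨b / a + 1, by positivity, fun x hx => ?_⟩
    set s := b / x with hs
    have hs0 : 0 ≤ s := by positivity
    have hsle : Real.sqrt d ≤ Real.sqrt (d + s) := Real.sqrt_le_sqrt (by linarith)
    have hDt : (0:ℝ) < (c + Real.sqrt (d + s)) ^ 2 + a + s := by positivity
    have hmono : (c + Real.sqrt d) ^ 2 + a ≤ (c + Real.sqrt (d + s)) ^ 2 + a + s := by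
      nlinarith [Real.sqrt_nonneg (d + s)]
    have key : (a + s) / ((c + Real.sqrt (d + s)) ^ 2 + a + s) ≤
        a / ((c + Real.sqrt d) ^ 2 + a) + s / a := by
      rw [div_add_div _ _ hD0.ne' ha.ne', div_le_div_iff₀ hDt (by positivity)]
      nlinarith [mul_nonneg hs0 hD0.le, mul_nonneg (mul_nonneg hs0 hD0.le) (sub_nonneg.2 hmono),
        mul_nonneg (mul_nonneg hs0 hD0.le) (by nlinarith [sq_nonneg (c + Real.sqrt d)] : (0:ℝ) ≤ (c + Real.sqrt d) ^ 2 + a - a),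
        mul_le_mul_of_nonneg_left hmono (sq_nonneg a)]
    have hsa : s / a ≤ (b / a + 1) / x := by
      have heq : s / a = (b / a) / x := by rw [hs]; ring
      rw [heq, add_div]
      have : 0 < 1 / x := by positivity
      linarith
    linarith
end

section
/- Let P_S, P_r, N_r, N_d be positive real numbers and, for a positive integer L, define Γ_nec(L) = (1/4)·log(1 + 2·L·P_S/N_r) and Γ_suf(L) = (1/4)·log(1 + 4·L·P_S·P_r/(2·P_S·N_d + 2·P_r·N_r + N_d·N_r)). Then (i) Γ_nec(L) − Γ_suf(L) = (1/4)·log(1 + 2·P_S·N_d·(2·P_S + N_r) / (4·P_S·P_r·N_r + N_r·(2·P_S·N_d + 2·P_r·N_r + N_d·N_r)/L)); (ii) the sequence L ↦ Γ_nec(L) − Γ_suf(L) is nondecreasing in L; and (iii) Γ_nec(L) − Γ_suf(L) tends to (1/4)·log(1 + N_d·(2·P_S + N_r)/(2·P_r·N_r)) as L → ∞. -/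
open Filter Real

/-- Proposition 1 of the paper: the gap between the necessary and sufficient
stabilization bounds for a symmetric parallel Gaussian relay network with `L`
relays: an explicit formula for the gap, monotonicity in `L`, and its limit as
`L → ∞`. -/
theorem parallel_network_gap
    (PS Pr Nr Nd : ℝ) (hPS : 0 < PS) (hPr : 0 < Pr) (hNr : 0 < Nr) (hNd : 0 < Nd) :
    (∀ L : ℕ, 0 < L →
      (1/4) * Real.log (1 + 2 * L * PS / Nr)
        - (1/4) * Real.log (1 + 4 * L * PS * Pr / (2 * PS * Nd + 2 * Pr * Nr + Nd * Nr))
      = (1/4) * Real.log (1 + 2 * PS * Nd * (2 * PS + Nr)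
          / (4 * PS * Pr * Nr + Nr * (2 * PS * Nd + 2 * Pr * Nr + Nd * Nr) / L))) ∧
    (∀ L₁ L₂ : ℕ, 0 < L₁ → L₁ ≤ L₂ →
      (1/4) * Real.log (1 + 2 * L₁ * PS / Nr)
        - (1/4) * Real.log (1 + 4 * L₁ * PS * Pr / (2 * PS * Nd + 2 * Pr * Nr + Nd * Nr))
      ≤ (1/4) * Real.log (1 + 2 * L₂ * PS / Nr)
        - (1/4) * Real.log (1 + 4 * L₂ * PS * Pr / (2 * PS * Nd + 2 * Pr * Nr + Nd * Nr))) ∧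
    Filter.Tendsto
      (fun L : ℕ =>
        (1/4) * Real.log (1 + 2 * L * PS / Nr)
          - (1/4) * Real.log (1 + 4 * L * PS * Pr / (2 * PS * Nd + 2 * Pr * Nr + Nd * Nr)))
      Filter.atTop (nhds ((1/4) * Real.log (1 + Nd * (2 * PS + Nr) / (2 * Pr * Nr)))) := by
  set D : ℝ := 2 * PS * Nd + 2 * Pr * Nr + Nd * Nr with hDdef
  have hD : 0 < D := by positivity
  set A : ℝ := 4 * PS * Pr * Nr with hAdef
  have hA : 0 < A := by positivity
  set C : ℝ := 2 * PS * Nd * (2 * PS + Nr) with hCdef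
  have hC : 0 < C := by positivity
  have key : ∀ L : ℕ, 0 < L →
      (1/4) * Real.log (1 + 2 * L * PS / Nr)
        - (1/4) * Real.log (1 + 4 * L * PS * Pr / D)
      = (1/4) * Real.log (1 + C / (A + Nr * D / L)) := by
    intro L hL
    have hLR : (0:ℝ) < (L : ℝ) := by exact_mod_cast hL
    have h1 : 0 < 1 + 2 * L * PS / Nr := by positivity
    have h2 : 0 < 1 + 4 * L * PS * Pr / D := by positivity
    rw [← mul_sub, ← Real.log_div h1.ne' h2.ne']
    congr 2
    have hden : 0 < A + Nr * D / L := by positivity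
    field_simp
    rw [hAdef, hCdef, hDdef]
    ring
  refine ⟨key, ?_, ?_⟩
  · intro L₁ L₂ hL₁ hle
    have hL₂ : 0 < L₂ := lt_of_lt_of_le hL₁ hle
    rw [key L₁ hL₁, key L₂ hL₂]
    have hLR₁ : (0:ℝ) < (L₁ : ℝ) := by exact_mod_cast hL₁
    have hLR₂ : (0:ℝ) < (L₂ : ℝ) := by exact_mod_cast hL₂
    have hleR : (L₁ : ℝ) ≤ L₂ := by exact_mod_cast hle
    have harg : 1 + C / (A + Nr * D / L₁) ≤ 1 + C / (A + Nr * D / L₂) := by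
      gcongr
    have hpos : 0 < 1 + C / (A + Nr * D / L₁) := by positivity
    have := Real.log_le_log hpos harg
    linarith
  · have heq : (fun L : ℕ =>
        (1/4) * Real.log (1 + 2 * L * PS / Nr)
          - (1/4) * Real.log (1 + 4 * L * PS * Pr / D))
        =ᶠ[Filter.atTop] (fun L : ℕ => (1/4) * Real.log (1 + C / (A + Nr * D / L))) := by
      filter_upwards [Filter.eventually_gt_atTop 0] with L hL
      exact key L hL
    have hlim0 : Filter.Tendsto (fun L : ℕ => Nr * D / (L : ℝ)) Filter.atTop (nhds 0) :=
      Filter.Tendsto.div_atTop tendsto_const_nhds tendsto_natCast_atTop_atTop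
    have hcont : ContinuousAt (fun x : ℝ => (1/4) * Real.log (1 + C / (A + x))) 0 := by
      have h1 : ContinuousAt (fun x : ℝ => 1 + C / (A + x)) 0 := by
        apply ContinuousAt.add continuousAt_const
        apply ContinuousAt.div continuousAt_const
        · exact ContinuousAt.add continuousAt_const continuousAt_id
        · simpa using hA.ne'
      have hne : (1:ℝ) + C / (A + 0) ≠ 0 := by positivity
      exact ContinuousAt.mul continuousAt_const (h1.log hne)
    have hlim := hcont.tendsto.comp hlim0
    have hval : (1/4) * Real.log (1 + C / (A + 0))
        = (1/4) * Real.log (1 + Nd * (2 * PS + Nr) / (2 * Pr * Nr)) := by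
      congr 2
      rw [add_zero, hAdef, hCdef]
      field_simp
      ring
    rw [← hval]
    exact Filter.Tendsto.congr' heq.symm hlim
end

section
/- Let P_S, P_r, N_r, N_d, c be positive real numbers and, for a positive integer L, define Γ_suf(L) = (1/4)·log(1 + 4·L²·c²·P_S·P_r/(2·L·c²·P_r·N_r + N_d·(2·P_S + N_r))) and Γ_nec(L) = (1/4)·log(1 + 2·L·P_S/N_r). Then (i) Γ_nec(L) − Γ_suf(L) = (1/4)·log(1 + ((4·P_S²·N_d + 2·P_S·N_r·N_d)/L) / (4·c²·P_S·P_r·N_r + 2·c²·P_r·N_r²/L + N_d·N_r·(2·P_S + N_r)/L²)); and (ii) Γ_nec(L) − Γ_suf(L) tends to 0 as L → ∞. -/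
open Real Filter

/-- Part of Proposition 2 of the paper (symmetric two-hop Gaussian relay network):
an explicit formula for the gap `Γ_nec(L) − Γ_suf(L)` and its convergence to `0`
as the number of relays `L → ∞`. -/
theorem two_hop_gap_formula_and_limit
    (PS Pr Nr Nd c : ℝ) (hPS : 0 < PS) (hPr : 0 < Pr) (hNr : 0 < Nr) (hNd : 0 < Nd)
    (hc : 0 < c) :
    (∀ L : ℕ, 0 < L →
      (1/4) * Real.log (1 + 2 * L * PS / Nr)
        - (1/4) * Real.log (1 + 4 * L^2 * c^2 * PS * Pr
            / (2 * L * c^2 * Pr * Nr + Nd * (2 * PS + Nr)))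
      = (1/4) * Real.log (1 + ((4 * PS^2 * Nd + 2 * PS * Nr * Nd) / L)
          / (4 * c^2 * PS * Pr * Nr + 2 * c^2 * Pr * Nr^2 / L
              + Nd * Nr * (2 * PS + Nr) / L^2))) ∧
    Filter.Tendsto
      (fun L : ℕ =>
        (1/4) * Real.log (1 + 2 * L * PS / Nr)
          - (1/4) * Real.log (1 + 4 * L^2 * c^2 * PS * Pr
              / (2 * L * c^2 * Pr * Nr + Nd * (2 * PS + Nr))))
      Filter.atTop (nhds 0) := by
  have key : ∀ l : ℝ, 0 < l →
      (1/4) * Real.log (1 + 2 * l * PS / Nr)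
        - (1/4) * Real.log (1 + 4 * l^2 * c^2 * PS * Pr
            / (2 * l * c^2 * Pr * Nr + Nd * (2 * PS + Nr)))
      = (1/4) * Real.log (1 + ((4 * PS^2 * Nd + 2 * PS * Nr * Nd) / l)
          / (4 * c^2 * PS * Pr * Nr + 2 * c^2 * Pr * Nr^2 / l
              + Nd * Nr * (2 * PS + Nr) / l^2)) := by
    intro l hl
    have hD : 0 < 2 * l * c^2 * Pr * Nr + Nd * (2 * PS + Nr) := by positivity
    have hA : 0 < 1 + 2 * l * PS / Nr := by positivity
    have hB : 0 < 1 + 4 * l^2 * c^2 * PS * Pr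
        / (2 * l * c^2 * Pr * Nr + Nd * (2 * PS + Nr)) := by positivity
    rw [← mul_sub, ← Real.log_div (ne_of_gt hA) (ne_of_gt hB)]
    congr 2
    have hDen : 0 < 4 * c^2 * PS * Pr * Nr + 2 * c^2 * Pr * Nr^2 / l
        + Nd * Nr * (2 * PS + Nr) / l^2 := by positivity
    field_simp
    ring
  refine ⟨fun L hL => key L (by exact_mod_cast hL), ?_⟩
  set C1 : ℝ := 4 * PS^2 * Nd + 2 * PS * Nr * Nd with hC1
  set C2 : ℝ := 4 * c^2 * PS * Pr * Nr with hC2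
  set C3 : ℝ := 2 * c^2 * Pr * Nr^2 with hC3
  set C4 : ℝ := Nd * Nr * (2 * PS + Nr) with hC4
  have hC2pos : 0 < C2 := by positivity
  have hh : ContinuousAt (fun t : ℝ => (C1 * t) / (C2 + C3 * t + C4 * t^2)) 0 := by
    apply ContinuousAt.div (by fun_prop) (by fun_prop)
    simp [hC2pos.ne']
  have h1 : Tendsto (fun L : ℕ => (1:ℝ)/L) atTop (nhds 0) :=
    tendsto_one_div_atTop_nhds_zero_nat
  have hg : Tendsto (fun L : ℕ => (C1 / (L:ℝ)) / (C2 + C3 / L + C4 / (L:ℝ)^2))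
      atTop (nhds 0) := by
    have := hh.tendsto.comp h1
    simp only [Function.comp_def] at this
    have h0 : (C1 * (0:ℝ)) / (C2 + C3 * 0 + C4 * 0^2) = 0 := by simp
    rw [h0] at this
    refine this.congr fun L => ?_
    simp [Function.comp, mul_one_div, div_pow, ← div_eq_mul_inv]
  have hlog : Tendsto (fun L : ℕ =>
      (1/4) * Real.log (1 + (C1 / (L:ℝ)) / (C2 + C3 / L + C4 / (L:ℝ)^2)))
      atTop (nhds 0) := by
    have hcont : ContinuousAt Real.log (1 + 0) :=
      Real.continuousAt_log (by norm_num)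
    have := (hcont.tendsto.comp (tendsto_const_nhds.add hg)).const_mul (1/4 : ℝ)
    simpa using this
  refine hlog.congr' ?_
  filter_upwards [eventually_ge_atTop 1] with L hL
  exact (key L (by exact_mod_cast hL)).symm
end

section
/- Fix a positive integer L and positive real numbers P_S, N_r, N_d, c. For P_r > 0 define G(P_r) = (1/4)·log(1 + 2·L·P_S/N_r) − (1/4)·log(1 + 4·L²·c²·P_S·P_r/(2·L·c²·P_r·N_r + N_d·(2·P_S + N_r))). Then G is strictly decreasing on (0, ∞) and G(P_r) tends to 0 as P_r → ∞. -/
/-- Second claim of Proposition 2 of the paper: for a symmetric two-hop Gaussian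
relay network, the gap `G(P_r)` between the necessary bound and the sufficient
(linear-scheme) bound is strictly decreasing in the per-relay power `P_r` and
tends to `0` as `P_r → ∞`. -/
theorem two_hop_gap_decreasing_in_power
    (L : ℕ) (hL : 0 < L) (PS Nr Nd c : ℝ)
    (hPS : 0 < PS) (hNr : 0 < Nr) (hNd : 0 < Nd) (hc : 0 < c) :
    StrictAntiOn
      (fun Pr : ℝ =>
        (1/4) * Real.log (1 + 2 * L * PS / Nr)
          - (1/4) * Real.log (1 + 4 * L^2 * c^2 * PS * Pr
              / (2 * L * c^2 * Pr * Nr + Nd * (2 * PS + Nr))))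
      (Set.Ioi (0 : ℝ)) ∧
    Filter.Tendsto
      (fun Pr : ℝ =>
        (1/4) * Real.log (1 + 2 * L * PS / Nr)
          - (1/4) * Real.log (1 + 4 * L^2 * c^2 * PS * Pr
              / (2 * L * c^2 * Pr * Nr + Nd * (2 * PS + Nr))))
      Filter.atTop (nhds 0) := by
  have hL' : (0:ℝ) < L := Nat.cast_pos.mpr hL
  have hA : (0:ℝ) < 4 * L^2 * c^2 * PS := by positivity
  have hB : (0:ℝ) < 2 * L * c^2 * Nr := by positivity
  have hD : (0:ℝ) < Nd * (2 * PS + Nr) := by positivity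
  set g : ℝ → ℝ := fun x => 4 * (L:ℝ)^2 * c^2 * PS * x
      / (2 * L * c^2 * x * Nr + Nd * (2 * PS + Nr)) with hg
  have hden : ∀ x : ℝ, 0 < x → 0 < 2 * (L:ℝ) * c^2 * x * Nr + Nd * (2 * PS + Nr) := by
    intro x hx; positivity
  have hgpos : ∀ x : ℝ, 0 < x → 0 < g x := by
    intro x hx
    exact div_pos (by positivity) (hden x hx)
  have hmono : ∀ x y : ℝ, 0 < x → x < y → g x < g y := by
    intro x y hx hxy
    have hy : 0 < y := hx.trans hxy
    rw [hg, div_lt_div_iff₀ (hden x hx) (hden y hy)]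
    nlinarith [mul_lt_mul_of_pos_left hxy (mul_pos hA hD), mul_pos hA hD]
  constructor
  · intro x hx y hy hxy
    simp only [Set.mem_Ioi] at hx hy
    have h1 : Real.log (1 + g x) < Real.log (1 + g y) := by
      apply Real.log_lt_log (by linarith [hgpos x hx])
      linarith [hmono x y hx hxy]
    simp only [hg]
    have := h1
    simp only [hg] at this
    linarith
  · have hlim : Filter.Tendsto g Filter.atTop
        (nhds (4 * (L:ℝ)^2 * c^2 * PS / (2 * L * c^2 * Nr))) := by
      have h2 : Filter.Tendsto
          (fun x : ℝ => 4 * (L:ℝ)^2 * c^2 * PS / (2 * L * c^2 * Nr + Nd * (2 * PS + Nr) / x))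
          Filter.atTop (nhds (4 * (L:ℝ)^2 * c^2 * PS / (2 * L * c^2 * Nr))) := by
        have h3 : Filter.Tendsto (fun x : ℝ => 2 * (L:ℝ) * c^2 * Nr + Nd * (2 * PS + Nr) / x)
            Filter.atTop (nhds (2 * (L:ℝ) * c^2 * Nr + 0)) :=
          tendsto_const_nhds.add (Filter.Tendsto.div_atTop tendsto_const_nhds Filter.tendsto_id)
        rw [add_zero] at h3
        exact Filter.Tendsto.div tendsto_const_nhds h3 (ne_of_gt hB)
      refine h2.congr' ?_
      filter_upwards [Filter.eventually_gt_atTop (0:ℝ)] with x hx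
      rw [hg]
      rw [div_eq_div_iff (by positivity) (ne_of_gt (hden x hx))]
      field_simp
    have hval : 4 * (L:ℝ)^2 * c^2 * PS / (2 * L * c^2 * Nr) = 2 * L * PS / Nr := by
      field_simp; ring
    rw [hval] at hlim
    have hlog : Filter.Tendsto (fun x => Real.log (1 + g x)) Filter.atTop
        (nhds (Real.log (1 + 2 * L * PS / Nr))) := by
      have hc1 : ContinuousAt Real.log (1 + 2 * (L:ℝ) * PS / Nr) :=
        Real.continuousAt_log (by positivity)
      exact hc1.tendsto.comp (tendsto_const_nhds.add hlim)
    have hfinal : Filter.Tendsto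
        (fun x => (1/4) * Real.log (1 + 2 * (L:ℝ) * PS / Nr) - (1/4) * Real.log (1 + g x))
        Filter.atTop (nhds ((1/4) * Real.log (1 + 2 * (L:ℝ) * PS / Nr)
          - (1/4) * Real.log (1 + 2 * (L:ℝ) * PS / Nr))) :=
      tendsto_const_nhds.sub (hlog.const_mul _)
    rw [sub_self] at hfinal
    exact hfinal
end

section
/- Let n be a positive integer and let c > 0 and P > 0 be real numbers. For every vector p = (p_1, …, p_n) with p_i ≥ 0 for all i and ∑_{i=1}^n p_i ≤ P, one has ∏_{i=1}^n p_i/(p_i + c) ≤ ((P/n)/(P/n + c))^n; that is, the equal allocation p_i = P/n maximizes the product ∏_i p_i/(p_i + c) over the simplex of nonnegative allocations with total budget P. -/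
/-- Uniform allocation optimality (Theorem 3 of the paper, case of equal noise
variances): for `c > 0` and budget `P > 0`, every nonnegative allocation
`p` with `∑ p_i ≤ P` satisfies `∏ p_i/(p_i + c) ≤ ((P/n)/(P/n + c))^n`. -/
theorem uniform_allocation_maximizes_product
    (n : ℕ) (hn : 0 < n) (c P : ℝ) (hc : 0 < c) (hP : 0 < P)
    (p : Fin n → ℝ) (hp : ∀ i, 0 ≤ p i) (hsum : ∑ i, p i ≤ P) :
    ∏ i, p i / (p i + c) ≤ ((P / n) / (P / n + c)) ^ n := by
  have hn' : (0:ℝ) < n := by exact_mod_cast hn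
  set R : ℝ := P / (P + n * c) with hR
  have hPnc : (0:ℝ) < P + n * c := by positivity
  have hRpos : 0 < R := by positivity
  have hRval : (P / n) / (P / n + c) = R := by
    rw [hR, div_add' _ _ _ hn'.ne', div_div_div_cancel_right₀]
    · ring_nf
    · exact hn'.ne'
  have ha : ∀ i : Fin n, (0:ℝ) < p i + c := fun i => by
    have := hp i; positivity
  -- AM-HM via Sedrakyan
  have hhm : (n:ℝ)^2 / (P + n * c) ≤ ∑ i, 1 / (p i + c) := by
    have h1 : ((n:ℝ))^2 / (∑ i, (p i + c)) ≤ ∑ i, 1 / (p i + c) := by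
      have := Finset.sq_sum_div_le_sum_sq_div Finset.univ (fun _ : Fin n => (1:ℝ))
        (g := fun i => p i + c) (fun i _ => ha i)
      simpa using this
    refine le_trans ?_ h1
    have hsum' : ∑ i, (p i + c) ≤ P + n * c := by
      rw [Finset.sum_add_distrib]
      simp only [Finset.sum_const, Finset.card_univ, Fintype.card_fin, nsmul_eq_mul]
      linarith
    have hsumpos : (0:ℝ) < ∑ i, (p i + c) := Finset.sum_pos (fun i _ => ha i) ⟨⟨0, hn⟩, Finset.mem_univ _⟩
    gcongr
  -- arithmetic mean bound
  have hAM : ∑ i, p i / (p i + c) ≤ n * R := by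
    have heq : ∑ i, p i / (p i + c) = n - c * ∑ i, 1 / (p i + c) := by
      have hterm : ∀ i : Fin n, p i / (p i + c) = 1 - c * (1 / (p i + c)) := fun i => by
        rw [mul_one_div, eq_sub_iff_add_eq, ← add_div, div_self (ha i).ne']
      rw [Finset.sum_congr rfl (fun i _ => hterm i), Finset.sum_sub_distrib, Finset.mul_sum]
      simp
    rw [heq]
    have : (n:ℝ) * R = n - c * ((n:ℝ)^2 / (P + n * c)) := by
      rw [hR]; field_simp; ring
    rw [this]
    have := hhm
    nlinarith [hc]
  -- AM-GM
  have hz : ∀ i : Fin n, (0:ℝ) ≤ p i / (p i + c) := fun i => div_nonneg (hp i) (ha i).le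
  have hgm : ∏ i, (p i / (p i + c)) ^ ((n:ℝ)⁻¹) ≤ ∑ i, (n:ℝ)⁻¹ * (p i / (p i + c)) := by
    refine Real.geom_mean_le_arith_mean_weighted Finset.univ _ _ (fun i _ => by positivity) ?_
      (fun i _ => hz i)
    · simp [Finset.card_univ]
      exact mul_inv_cancel₀ hn'.ne'
  have hprod : ∏ i, p i / (p i + c) = (∏ i, (p i / (p i + c)) ^ ((n:ℝ)⁻¹)) ^ n := by
    rw [← Finset.prod_pow]
    refine Finset.prod_congr rfl (fun i _ => ?_)
    rw [← Real.rpow_natCast ((p i / (p i + c)) ^ ((n:ℝ)⁻¹)) n, ← Real.rpow_mul (hz i)]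
    rw [inv_mul_cancel₀ hn'.ne', Real.rpow_one]
  have hAavg : ∑ i, (n:ℝ)⁻¹ * (p i / (p i + c)) ≤ R := by
    rw [← Finset.mul_sum]
    calc (n:ℝ)⁻¹ * ∑ i, p i / (p i + c) ≤ (n:ℝ)⁻¹ * (n * R) := by
          gcongr
      _ = R := by field_simp
  rw [hRval, hprod]
  have hGnn : 0 ≤ ∏ i, (p i / (p i + c)) ^ ((n:ℝ)⁻¹) :=
    Finset.prod_nonneg (fun i _ => Real.rpow_nonneg (hz i) _)
  calc (∏ i, (p i / (p i + c)) ^ ((n:ℝ)⁻¹)) ^ n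
      ≤ (∑ i, (n:ℝ)⁻¹ * (p i / (p i + c))) ^ n := pow_le_pow_left₀ hGnn hgm n
    _ ≤ R ^ n := pow_le_pow_left₀ (Finset.sum_nonneg fun i _ => mul_nonneg (by positivity) (hz i)) hAavg n
end

section
/- Let λ, k, f∞, m, n_w be positive real numbers with λ⁴·k·f∞ < 1, and let f : (0, ∞) → ℝ be a function satisfying 0 ≤ f(x) ≤ f∞ + m/x for all x ≥ n_w. Let (α_t)_{t ∈ ℕ} be a sequence with α₀ ≥ n_w and α_{t+1} = λ²·(λ²·k·α_t + n_w)·f(α_t) + n_w for every t. Then α_t ≥ n_w for all t and the sequence (α_t) is bounded above. -/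
/-- Boundedness argument in the proof of Theorem 8 of the paper (Appendix B):
if `λ⁴·k·f∞ < 1` and `0 ≤ f(x) ≤ f∞ + m/x` for all `x ≥ n_w`, then the
state-variance recursion `α_{t+1} = λ²·(λ²·k·α_t + n_w)·f(α_t) + n_w`, started
from `α₀ ≥ n_w`, stays `≥ n_w` and is bounded above. -/
theorem half_duplex_variance_bounded
    (lam k finf m nw : ℝ)
    (hlam : 0 < lam) (hk : 0 < k) (hfinf : 0 < finf) (hm : 0 < m) (hnw : 0 < nw)
    (hcond : lam ^ 4 * k * finf < 1)
    (f : ℝ → ℝ) (hf : ∀ x : ℝ, nw ≤ x → 0 ≤ f x ∧ f x ≤ finf + m / x)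
    (α : ℕ → ℝ) (hα₀ : nw ≤ α 0)
    (hrec : ∀ t : ℕ, α (t + 1) = lam ^ 2 * (lam ^ 2 * k * α t + nw) * f (α t) + nw) :
    (∀ t : ℕ, nw ≤ α t) ∧ ∃ M : ℝ, ∀ t : ℕ, α t ≤ M := by
  have hc0 : (0:ℝ) ≤ lam ^ 4 * k * finf := by positivity
  have hD0 : (0:ℝ) < lam ^ 4 * k * m + lam ^ 2 * nw * (finf + m / nw) + nw := by
    positivity
  -- lower bound
  have hge : ∀ t, nw ≤ α t := by
    intro t
    induction t with
    | zero => exact hα₀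
    | succ t ih =>
      have hαpos : 0 < α t := lt_of_lt_of_le hnw ih
      have hf1 := (hf (α t) ih).1
      have hbracket : 0 ≤ lam ^ 2 * (lam ^ 2 * k * α t + nw) := by positivity
      have := mul_nonneg hbracket hf1
      rw [hrec t]; linarith
  refine ⟨hge, ?_⟩
  -- step bound
  have hstep : ∀ t, α (t + 1) ≤ lam ^ 4 * k * finf * α t +
      (lam ^ 4 * k * m + lam ^ 2 * nw * (finf + m / nw) + nw) := by
    intro t
    have ih := hge t
    have hαpos : 0 < α t := lt_of_lt_of_le hnw ih
    obtain ⟨hf1, hf2⟩ := hf (α t) ih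
    have hbracket : 0 ≤ lam ^ 2 * (lam ^ 2 * k * α t + nw) := by positivity
    have h1 : lam ^ 2 * (lam ^ 2 * k * α t + nw) * f (α t)
        ≤ lam ^ 2 * (lam ^ 2 * k * α t + nw) * (finf + m / α t) :=
      mul_le_mul_of_nonneg_left hf2 hbracket
    have hcancel : m / α t * α t = m := div_mul_cancel₀ m (ne_of_gt hαpos)
    have hcancel2 : m / nw * nw = m := div_mul_cancel₀ m (ne_of_gt hnw)
    have hma : m / α t ≤ m / nw :=
      div_le_div_of_nonneg_left (le_of_lt hm) hnw ih
    rw [hrec t]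
    nlinarith [mul_le_mul_of_nonneg_left hma (by positivity : (0:ℝ) ≤ lam ^ 2 * nw)]
  -- boundedness
  refine ⟨max (α 0) ((lam ^ 4 * k * m + lam ^ 2 * nw * (finf + m / nw) + nw) / (1 - lam ^ 4 * k * finf)), ?_⟩
  have h1c : (0:ℝ) < 1 - lam ^ 4 * k * finf := by linarith
  intro t
  induction t with
  | zero => exact le_max_left _ _
  | succ t ih =>
    have hM2 : (lam ^ 4 * k * m + lam ^ 2 * nw * (finf + m / nw) + nw) / (1 - lam ^ 4 * k * finf)
        ≤ max (α 0) ((lam ^ 4 * k * m + lam ^ 2 * nw * (finf + m / nw) + nw) / (1 - lam ^ 4 * k * finf)) := le_max_right _ _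
    have hDle : lam ^ 4 * k * m + lam ^ 2 * nw * (finf + m / nw) + nw ≤ (1 - lam ^ 4 * k * finf) * max (α 0) ((lam ^ 4 * k * m + lam ^ 2 * nw * (finf + m / nw) + nw) / (1 - lam ^ 4 * k * finf)) := by
      rw [div_le_iff₀ h1c] at hM2; linarith [hM2]
    have hmul := mul_le_mul_of_nonneg_left ih hc0
    have := hstep t
    nlinarith
end
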